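/- arXiv:1902.03035 — 4 statements merged into one kernel-verified Lean document; each statement's English description precedes it below -/
import Mathlib

section
/- Let W be a symmetric positive definite d×d matrix with unit trace and eigendecomposition W = Σ_i λ_i u_i u_i^T. Consider the sparse sampling scheme: draw I, J independently with P(I=i)=P(J=i)=λ_i; if I=J set w = u_I; if I≠J draw a uniform sign s ∈ {-1,1} and set w = (u_I + s u_J)/√2. Then E[w w^T] = W. -/
open Matrix Finset

/-- Sparse sampling: draw `I, J` i.i.d. with `P(I=i) = λ i`; if `I = J` play
`w = u I`, otherwise play `w = (u I + s u J)/√2` with a uniform sign `s`. Then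
`E[w wᵀ] = W`, the expectation written out as an explicit finite sum. -/
theorem stmt_3 (d : ℕ) (l : Fin d → ℝ) (u : Fin d → Fin d → ℝ)
    (W : Matrix (Fin d) (Fin d) ℝ)
    (hortho : ∀ i j, dotProduct (u i) (u j) = if i = j then (1 : ℝ) else 0)
    (hl : ∀ i, 0 < l i) (hsum : ∑ i, l i = 1)
    (hW : W = ∑ i, l i • Matrix.vecMulVec (u i) (u i)) :
    ∑ i, ∑ j, (l i * l j) •
      (if i = j then Matrix.vecMulVec (u i) (u i)
       else (2 : ℝ)⁻¹ •
          ((2 : ℝ)⁻¹ • Matrix.vecMulVec (u i + u j) (u i + u j)) +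
            (2 : ℝ)⁻¹ •
          ((2 : ℝ)⁻¹ • Matrix.vecMulVec (u i - u j) (u i - u j))) = W := by
  have key : ∀ i j : Fin d,
      (if i = j then Matrix.vecMulVec (u i) (u i)
       else (2 : ℝ)⁻¹ •
          ((2 : ℝ)⁻¹ • Matrix.vecMulVec (u i + u j) (u i + u j)) +
            (2 : ℝ)⁻¹ •
          ((2 : ℝ)⁻¹ • Matrix.vecMulVec (u i - u j) (u i - u j)))
      = (2 : ℝ)⁻¹ • Matrix.vecMulVec (u i) (u i)
        + (2 : ℝ)⁻¹ • Matrix.vecMulVec (u j) (u j) := by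
    intro i j
    by_cases h : i = j
    · subst h
      rw [if_pos rfl, ← add_smul]
      norm_num
    · rw [if_neg h]
      ext a b
      simp [Matrix.vecMulVec_apply]
      ring
  rw [hW]
  ext a b
  simp only [key, Matrix.sum_apply, Matrix.smul_apply, Matrix.add_apply,
    Matrix.vecMulVec_apply, smul_eq_mul]
  have expand : ∀ i j : Fin d,
      l i * l j * (2⁻¹ * (u i a * u i b) + 2⁻¹ * (u j a * u j b))
      = l j * (l i * (2⁻¹ * (u i a * u i b))) + l i * (l j * (2⁻¹ * (u j a * u j b))) := by
    intro i j; ring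
  simp only [expand, Finset.sum_add_distrib, ← Finset.sum_mul, ← Finset.mul_sum, hsum]
  simp only [one_mul, ← Finset.sum_add_distrib]
  exact Finset.sum_congr rfl fun x _ => by ring
end

section
/- Let W be symmetric positive definite with unit trace and eigendecomposition W = Σ_i λ_i u_i u_i^T, and let L be any symmetric d×d matrix. Under the sparse sampling scheme (I,J ~ λ independently; if I=J, w=u_I and L̃ = (ℓ/λ_I²) u_I u_I^T with ℓ = tr(w w^T L); if I≠J, with uniform sign s, w=(u_I+s u_J)/√2 and L̃ = (s ℓ/(2 λ_I λ_J))(u_I u_J^T + u_J u_I^T)), the loss estimate is unbiased: E[L̃] = L. -/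
open Matrix Finset

/-- The loss estimate of the sparse sampling scheme: when `I = J = i`, it is
`(ℓ/λ_i²) u_i u_iᵀ` with `ℓ = tr(u_i u_iᵀ L)`; when `I = i ≠ j = J` and the sign
is `s`, it is `(s ℓ/(2 λ_i λ_j))(u_i u_jᵀ + u_j u_iᵀ)` with
`ℓ = tr(w wᵀ L)`, `w = (u_i + s u_j)/√2`. -/
noncomputable def sparseEst (d : ℕ) (l : Fin d → ℝ) (u : Fin d → Fin d → ℝ)
    (L : Matrix (Fin d) (Fin d) ℝ) (i j : Fin d) (s : ℝ) :
    Matrix (Fin d) (Fin d) ℝ :=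
  if i = j then
    (Matrix.trace (Matrix.vecMulVec (u i) (u i) * L) / (l i) ^ 2) •
      Matrix.vecMulVec (u i) (u i)
  else
    (s * Matrix.trace
        (Matrix.vecMulVec ((Real.sqrt 2)⁻¹ • (u i + s • u j))
          ((Real.sqrt 2)⁻¹ • (u i + s • u j)) * L) / (2 * l i * l j)) •
      (Matrix.vecMulVec (u i) (u j) + Matrix.vecMulVec (u j) (u i))

/-- The sparse-sampling loss estimate is unbiased: `E[L̃] = L`. -/
theorem stmt_4 (d : ℕ) (l : Fin d → ℝ) (u : Fin d → Fin d → ℝ)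
    (L : Matrix (Fin d) (Fin d) ℝ)
    (hortho : ∀ i j, dotProduct (u i) (u j) = if i = j then (1 : ℝ) else 0)
    (hl : ∀ i, 0 < l i) (hsum : ∑ i, l i = 1)
    (hL : L.IsSymm) :
    ∑ i, ∑ j, (l i * l j) •
      ((2 : ℝ)⁻¹ • sparseEst d l u L i j 1 + (2 : ℝ)⁻¹ • sparseEst d l u L i j (-1))
      = L := by
  have h2 : ((Real.sqrt 2)⁻¹ * (Real.sqrt 2)⁻¹ : ℝ) = 2⁻¹ := by
    rw [← mul_inv, Real.mul_self_sqrt (by norm_num)]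
  have htr : ∀ x y : Fin d → ℝ, Matrix.trace (Matrix.vecMulVec x y * L) = y ⬝ᵥ L *ᵥ x := by
    intro x y
    simp only [Matrix.trace, Matrix.diag, Matrix.mul_apply, Matrix.vecMulVec_apply,
      dotProduct, Matrix.mulVec]
    rw [Finset.sum_comm]
    refine Finset.sum_congr rfl fun q _ => ?_
    rw [Finset.mul_sum]
    exact Finset.sum_congr rfl fun p _ => by ring
  have hsymL : ∀ p q, L p q = L q p := fun p q => (hL.apply q p)
  have hsym : ∀ i j, (u i ⬝ᵥ L *ᵥ u j) = (u j ⬝ᵥ L *ᵥ u i) := by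
    intro i j
    simp only [dotProduct, Matrix.mulVec, Finset.mul_sum]
    rw [Finset.sum_comm]
    refine Finset.sum_congr rfl fun q _ => Finset.sum_congr rfl fun p _ => ?_
    rw [hsymL p q]; ring
  have hcol : ∀ p q, ∑ i, u i p * u i q = if p = q then (1:ℝ) else 0 := by
    intro p q
    have hU : (Matrix.of u) * (Matrix.of u)ᵀ = 1 := by
      ext i j
      simpa [Matrix.mul_apply, dotProduct, Matrix.one_apply] using hortho i j
    have hU2 : (Matrix.of u)ᵀ * (Matrix.of u) = 1 := mul_eq_one_comm.mp hU
    simpa [Matrix.mul_apply, Matrix.one_apply] using congrFun (congrFun hU2 p) q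
  have hw : ∀ x y : Fin d → ℝ,
      ((Real.sqrt 2)⁻¹ • x) ⬝ᵥ L *ᵥ ((Real.sqrt 2)⁻¹ • y) = 2⁻¹ * (x ⬝ᵥ L *ᵥ y) := by
    intro x y
    rw [smul_dotProduct, Matrix.mulVec_smul, dotProduct_smul,
      smul_eq_mul, smul_eq_mul, ← mul_assoc, h2]
  have hterm : ∀ i j, (l i * l j) •
      ((2 : ℝ)⁻¹ • sparseEst d l u L i j 1 + (2 : ℝ)⁻¹ • sparseEst d l u L i j (-1))
      = (((u i ⬝ᵥ L *ᵥ u j) + (u j ⬝ᵥ L *ᵥ u i))/4) •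
        (Matrix.vecMulVec (u i) (u j) + Matrix.vecMulVec (u j) (u i)) := by
    intro i j
    by_cases hij : i = j
    · subst hij
      have hEe : ∀ s, sparseEst d l u L i i s
          = ((u i ⬝ᵥ L *ᵥ u i) / l i ^ 2) • Matrix.vecMulVec (u i) (u i) := fun s => by
        simp [sparseEst, htr]
      rw [hEe 1, hEe (-1)]
      rw [show Matrix.vecMulVec (u i) (u i) + Matrix.vecMulVec (u i) (u i)
          = (2:ℝ) • Matrix.vecMulVec (u i) (u i) from (two_smul ℝ _).symm]
      simp only [smul_smul, ← add_smul]
      congr 1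
      have hne := (hl i).ne'
      field_simp
      ring
    · simp only [sparseEst, if_neg hij, htr, hw, one_smul, neg_smul,
        Matrix.mulVec_add, Matrix.mulVec_neg, dotProduct_add,
        dotProduct_neg, add_dotProduct, neg_dotProduct]
      simp only [smul_smul, ← add_smul]
      congr 1
      have h1 := (hl i).ne'
      have hj1 := (hl j).ne'
      field_simp
      ring
  rw [Finset.sum_congr rfl fun i _ => Finset.sum_congr rfl fun j _ => hterm i j]
  have hswap : (∑ i, ∑ j, (((u i ⬝ᵥ L *ᵥ u j) + (u j ⬝ᵥ L *ᵥ u i))/4) •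
        Matrix.vecMulVec (u j) (u i))
      = ∑ i, ∑ j, (((u j ⬝ᵥ L *ᵥ u i) + (u i ⬝ᵥ L *ᵥ u j))/4) •
        Matrix.vecMulVec (u i) (u j) := Finset.sum_comm
  have hred : ∑ i, ∑ j, (((u i ⬝ᵥ L *ᵥ u j) + (u j ⬝ᵥ L *ᵥ u i))/4) •
      (Matrix.vecMulVec (u i) (u j) + Matrix.vecMulVec (u j) (u i))
      = ∑ i, ∑ j, (u i ⬝ᵥ L *ᵥ u j) • Matrix.vecMulVec (u i) (u j) := by
    simp only [smul_add, Finset.sum_add_distrib]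
    rw [hswap, ← Finset.sum_add_distrib]
    refine Finset.sum_congr rfl fun i _ => ?_
    rw [← Finset.sum_add_distrib]
    refine Finset.sum_congr rfl fun j _ => ?_
    rw [← add_smul]
    congr 1
    rw [hsym i j]
    ring
  rw [hred]
  have hcomp : ∀ (v : Fin d → ℝ) (q : Fin d), ∑ j, (v ⬝ᵥ u j) * u j q = v q := by
    intro v q
    simp only [dotProduct, Finset.sum_mul]
    rw [Finset.sum_comm]
    simp only [mul_assoc, ← Finset.mul_sum]
    simp [hcol]
  ext a c
  simp only [Matrix.sum_apply, Matrix.smul_apply, Matrix.vecMulVec_apply, smul_eq_mul]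
  have inner : ∀ i, ∑ j, (u i ⬝ᵥ L *ᵥ u j) * (u i a * u j c) = u i a * (L.vecMul (u i)) c := by
    intro i
    rw [show (L.vecMul (u i)) c = ∑ j, ((L.vecMul (u i)) ⬝ᵥ u j) * u j c from (hcomp _ c).symm,
      Finset.mul_sum]
    refine Finset.sum_congr rfl fun j _ => ?_
    rw [Matrix.dotProduct_mulVec]
    ring
  rw [Finset.sum_congr rfl fun i _ => inner i]
  have step : ∀ p, ∑ i, u i a * (u i p * L p c) = (if a = p then (1:ℝ) else 0) * L p c := by
    intro p
    rw [← hcol a p, Finset.sum_mul]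
    exact Finset.sum_congr rfl fun i _ => by ring
  calc ∑ i, u i a * (L.vecMul (u i)) c
      = ∑ i, ∑ p, u i a * (u i p * L p c) := by
        refine Finset.sum_congr rfl fun i _ => ?_
        simp only [Matrix.vecMul, dotProduct, Finset.mul_sum]
    _ = ∑ p, ∑ i, u i a * (u i p * L p c) := Finset.sum_comm
    _ = ∑ p, (if a = p then (1:ℝ) else 0) * L p c := Finset.sum_congr rfl fun p _ => step p
    _ = L a c := by simp
end

section
/- Let W be symmetric positive definite with unit trace and eigenvectors u_i, eigenvalues λ_i > 0. With off-diagonal sampling w = Σ_i s_i √λ_i u_i (s_i i.i.d. uniform ±1) and estimate L̃ = ℓ (W^{-1} w w^T W^{-1} − W^{-1}) where ℓ = tr(w w^T L) for a symmetric matrix L, we have E[L̃] = 2(L − Σ_i (u_i^T L u_i) u_i u_i^T). -/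
open Matrix Finset

lemma vmv_mul_vmv {d : ℕ} (x y z w : Fin d → ℝ) :
    vecMulVec x y * vecMulVec z w = (y ⬝ᵥ z) • vecMulVec x w := by
  ext p q
  simp [mul_apply, vecMulVec_apply, dotProduct, Finset.sum_mul, Finset.mul_sum]
  exact Finset.sum_congr rfl (fun j _ => by ring)

lemma trace_vmv_mul {d : ℕ} (x y : Fin d → ℝ) (A : Matrix (Fin d) (Fin d) ℝ) :
    trace (vecMulVec x y * A) = y ⬝ᵥ A.mulVec x := by
  simp only [trace, Matrix.diag, mul_apply, vecMulVec_apply, dotProduct, mulVec]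
  rw [Finset.sum_comm]
  exact Finset.sum_congr rfl (fun j _ => by rw [Finset.mul_sum]; exact Finset.sum_congr rfl (fun p _ => by ring))

lemma vmv_sum_sum {d : ℕ} (f g : Fin d → ℝ) (u : Fin d → Fin d → ℝ) :
    vecMulVec (∑ i, f i • u i) (∑ i, g i • u i)
      = ∑ a, ∑ b, (f a * g b) • vecMulVec (u a) (u b) := by
  ext p q
  simp [vecMulVec_apply, Finset.sum_apply, Matrix.sum_apply, Finset.sum_mul, Finset.mul_sum]
  rw [Finset.sum_comm]
  exact Finset.sum_congr rfl fun a _ => Finset.sum_congr rfl fun b _ => by ring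

lemma momentGen {d : ℕ} (m : Fin d → ℕ) :
    ∑ s ∈ Fintype.piFinset (fun _ : Fin d => ({-1, 1} : Finset ℝ)),
      ∏ i, (s i) ^ (m i) = ∏ i, (if Even (m i) then (2:ℝ) else 0) := by
  rw [Finset.sum_prod_piFinset (({-1,1}) : Finset ℝ) (fun i x => x ^ m i)]
  refine Finset.prod_congr rfl fun i _ => ?_
  have : ({-1, 1} : Finset ℝ) = insert (-1) {1} := rfl
  rw [this, Finset.sum_insert (by norm_num), Finset.sum_singleton, one_pow]
  rcases Nat.even_or_odd (m i) with h | h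
  · simp [h, Even.neg_one_pow h]; norm_num
  · simp [h.neg_one_pow, Nat.not_even_iff_odd.2 h]

lemma rep1 {d : ℕ} (s : Fin d → ℝ) (a : Fin d) :
    s a = ∏ i, (s i) ^ (if i = a then 1 else 0) := by
  simp [pow_ite]

lemma prodEvenAll {d : ℕ} (m : Fin d → ℕ) (h : ∀ i, Even (m i)) :
    ∏ i, (if Even (m i) then (2:ℝ) else 0) = 2 ^ d := by
  calc ∏ i, (if Even (m i) then (2:ℝ) else 0) = ∏ _i : Fin d, (2:ℝ) :=
        Finset.prod_congr rfl (fun i _ => if_pos (h i))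
    _ = 2 ^ d := by simp

lemma prodOddZero {d : ℕ} (m : Fin d → ℕ) (j : Fin d) (h : ¬ Even (m j)) :
    ∏ i, (if Even (m i) then (2:ℝ) else 0) = 0 :=
  Finset.prod_eq_zero (Finset.mem_univ j) (by simp [h])

lemma moment2 {d : ℕ} (a b : Fin d) :
    ∑ s ∈ Fintype.piFinset (fun _ : Fin d => ({-1, 1} : Finset ℝ)), s a * s b
      = if a = b then (2:ℝ)^d else 0 := by
  have hrep : ∀ s : Fin d → ℝ,
      s a * s b = ∏ i, (s i) ^ ((if i = a then 1 else 0) + (if i = b then 1 else 0)) := by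
    intro s
    simp only [pow_add, Finset.prod_mul_distrib, ← rep1]
  simp only [hrep, momentGen]
  rcases eq_or_ne a b with rfl | hab
  · rw [if_pos rfl, prodEvenAll]
    intro i
    by_cases h : i = a <;> simp [h]
  · rw [if_neg hab, prodOddZero _ a]
    simp [hab]

lemma moment4 {d : ℕ} (a b c e : Fin d) :
    ∑ s ∈ Fintype.piFinset (fun _ : Fin d => ({-1, 1} : Finset ℝ)), s a * s b * s c * s e
      = (2:ℝ)^d * ((if a = b then 1 else 0) * (if c = e then 1 else 0)
          + (if a = c then 1 else 0) * (if b = e then 1 else 0)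
          + (if a = e then 1 else 0) * (if b = c then 1 else 0)
          - 2 * (if a = b ∧ b = c ∧ c = e then 1 else 0)) := by
  have hrep : ∀ s : Fin d → ℝ,
      s a * s b * s c * s e = ∏ i, (s i) ^ (((if i = a then 1 else 0) + (if i = b then 1 else 0))
        + ((if i = c then 1 else 0) + (if i = e then 1 else 0))) := by
    intro s
    simp only [pow_add, Finset.prod_mul_distrib, ← rep1]
    ring
  simp only [hrep, momentGen]
  by_cases hab : a = b
  · subst hab
    by_cases hce : c = e
    · subst hce
      by_cases hac : a = c
      · subst hac
        rw [prodEvenAll _ (fun i => by by_cases h : i = a <;> simp [h] <;> decide)]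
        simp; ring
      · rw [prodEvenAll _ (fun i => by
          by_cases h1 : i = a <;> by_cases h2 : i = c <;> simp [h1, h2, hac] <;>
            (try split_ifs) <;> decide)]
        simp [hac, Ne.symm hac]
    · rw [prodOddZero _ c (by
        by_cases h1 : c = a
        · have hae : ¬ a = e := fun h => hce (h1.trans h)
          simp [h1, hce, hae] <;> (try split_ifs) <;> decide
        · simp [h1, hce] <;> (try split_ifs) <;> decide)]
      by_cases hac : a = c
      · have hae : ¬ a = e := fun h => hce (hac.symm.trans h)
        simp [hce, hac, hae]
      · simp [hce, hac]
  · by_cases hce : c = e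
    · subst hce
      rw [prodOddZero _ a (by
        by_cases h : a = c
        · have hcb : ¬ c = b := fun hh => hab (h.trans hh)
          simp [hab, h, hcb] <;> (try split_ifs) <;> decide
        · simp [hab, h] <;> (try split_ifs) <;> decide)]
      by_cases hac : a = c
      · have hbc : ¬ b = c := fun h => hab (hac.trans h.symm)
        have hcb : ¬ c = b := fun h => hbc h.symm
        simp [hab, hac, hbc, hcb]
      · simp [hab, hac]
    · by_cases hac : a = c
      · subst hac
        by_cases hbe : b = e
        · subst hbe
          rw [prodEvenAll _ (fun i => by
            by_cases h1 : i = a <;> by_cases h2 : i = b <;>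
              simp [h1, h2, hab, Ne.symm hab] <;> (try split_ifs) <;> decide)]
          simp [hab, hce]
        · rw [prodOddZero _ b (by
            simp [Ne.symm hab, hbe] <;> (try split_ifs) <;> decide)]
          simp [hab, hce, hbe]
      · by_cases hae : a = e
        · subst hae
          by_cases hbc : b = c
          · subst hbc
            rw [prodEvenAll _ (fun i => by
              by_cases h1 : i = a <;> by_cases h2 : i = b <;>
                simp [h1, h2, hab, Ne.symm hab] <;> (try split_ifs) <;> decide)]
            simp [hab, hce, hac]
          · rw [prodOddZero _ c (by
              simp [Ne.symm hac, Ne.symm hbc, hce] <;> (try split_ifs) <;> decide)]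
            simp [hab, hce, hac, hbc]
        · rw [prodOddZero _ a (by simp [hab, hac, hae] <;> (try split_ifs) <;> decide)]
          simp [hab, hce, hac, hae]

lemma vmv_mul {d : ℕ} (x y : Fin d → ℝ) (A : Matrix (Fin d) (Fin d) ℝ) :
    vecMulVec x y * A = vecMulVec x (A.vecMul y) := by
  ext p q
  simp [mul_apply, vecMulVec_apply, vecMul, dotProduct, Finset.mul_sum]
  exact Finset.sum_congr rfl fun j _ => by ring

lemma complete {d : ℕ} (u : Fin d → Fin d → ℝ)
    (hortho : ∀ i j, dotProduct (u i) (u j) = if i = j then (1 : ℝ) else 0) :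
    ∑ i, vecMulVec (u i) (u i) = (1 : Matrix (Fin d) (Fin d) ℝ) := by
  have h1 : (Matrix.of u) * (Matrix.of u)ᵀ = 1 := by
    ext i j
    simpa [mul_apply, dotProduct, one_apply] using hortho i j
  have h2 : (Matrix.of u)ᵀ * (Matrix.of u) = 1 := mul_eq_one_comm.mp h1
  calc ∑ i, vecMulVec (u i) (u i) = (Matrix.of u)ᵀ * (Matrix.of u) := by
        ext p q
        simp [Matrix.sum_apply, vecMulVec_apply, mul_apply, mul_comm]
    _ = 1 := h2

lemma sum_ite_smul {d : ℕ} (a : Fin d) (f : Fin d → ℝ) (N : Fin d → Matrix (Fin d) (Fin d) ℝ) :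
    ∑ i, f i • ((if i = a then (1:ℝ) else 0) • N i) = f a • N a := by
  simp [ite_smul, smul_ite, Finset.sum_ite_eq']

lemma conj_sum {d : ℕ} (V' : Matrix (Fin d) (Fin d) ℝ) (f : Fin d → Fin d → ℝ)
    (N : Fin d → Fin d → Matrix (Fin d) (Fin d) ℝ) :
    V' * (∑ a, ∑ b, f a b • N a b) * V' = ∑ a, ∑ b, f a b • (V' * N a b * V') := by
  rw [Finset.mul_sum, Finset.sum_mul]
  refine Finset.sum_congr rfl fun a _ => ?_
  rw [Finset.mul_sum, Finset.sum_mul]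
  refine Finset.sum_congr rfl fun b _ => ?_
  rw [mul_smul_comm, smul_mul_assoc]

/-- Off-diagonal sampling: play `w = ∑ i, s i √(λ i) • u i` with i.i.d. uniform
signs `s`, and use the estimate `L̃ = ℓ (W⁻¹ w wᵀ W⁻¹ − W⁻¹)` with
`ℓ = tr(w wᵀ L)`.  Then `E[L̃] = 2 (L − ∑ i (u_iᵀ L u_i) u_i u_iᵀ)`. -/
theorem stmt_6 (d : ℕ) (l : Fin d → ℝ) (u : Fin d → Fin d → ℝ)
    (W L : Matrix (Fin d) (Fin d) ℝ)
    (hortho : ∀ i j, dotProduct (u i) (u j) = if i = j then (1 : ℝ) else 0)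
    (hl : ∀ i, 0 < l i) (hsum : ∑ i, l i = 1)
    (hW : W = ∑ i, l i • Matrix.vecMulVec (u i) (u i))
    (hL : L.IsSymm) :
    ((2 : ℝ) ^ d)⁻¹ •
      ∑ s ∈ Fintype.piFinset (fun _ : Fin d => ({-1, 1} : Finset ℝ)),
        (Matrix.trace
            (Matrix.vecMulVec (∑ i, (s i * Real.sqrt (l i)) • u i)
              (∑ i, (s i * Real.sqrt (l i)) • u i) * L)) •
          (W⁻¹ * Matrix.vecMulVec (∑ i, (s i * Real.sqrt (l i)) • u i)
              (∑ i, (s i * Real.sqrt (l i)) • u i) * W⁻¹ - W⁻¹)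
      = (2 : ℝ) • (L - ∑ i,
          (dotProduct (u i) (L.mulVec (u i))) • Matrix.vecMulVec (u i) (u i)) := by
  classical
  set M : Fin d → Fin d → Matrix (Fin d) (Fin d) ℝ := fun a b => vecMulVec (u a) (u b) with hMdef
  set K : Fin d → Fin d → ℝ := fun a b => dotProduct (u a) (L.mulVec (u b)) with hKdef
  set c : Fin d → ℝ := fun i => Real.sqrt (l i) with hcdef
  have hc0 : ∀ i, c i ≠ 0 := fun i => by
    simp [hcdef, Real.sqrt_ne_zero', hl i]
  have hc2 : ∀ i, c i * c i = l i := fun i =>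
    Real.mul_self_sqrt (hl i).le
  have hMmul : ∀ a b a' b', M a b * M a' b' = (if b = a' then (1:ℝ) else 0) • M a b' := by
    intro a b a' b'
    simp only [hMdef]
    rw [vmv_mul_vmv, hortho]
  have hcomp : ∑ i, M i i = 1 := complete u hortho
  set V : Matrix (Fin d) (Fin d) ℝ := ∑ i, (l i)⁻¹ • M i i with hVdef
  have hWV : W * V = 1 := by
    calc W * V = ∑ i, ∑ j, (l i * (l j)⁻¹) • ((if i = j then (1:ℝ) else 0) • M i j) := by
          rw [hW, Finset.sum_mul]
          refine Finset.sum_congr rfl fun i _ => ?_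
          rw [hVdef, Finset.mul_sum]
          refine Finset.sum_congr rfl fun j _ => ?_
          rw [smul_mul_assoc, mul_smul_comm, smul_smul, hMmul]
      _ = ∑ i, (l i * (l i)⁻¹) • ((if i = i then (1:ℝ) else 0) • M i i) := by
          refine Finset.sum_congr rfl fun i _ => ?_
          rw [Finset.sum_eq_single i (fun j _ hj => by simp [Ne.symm hj])
            (fun h => absurd (Finset.mem_univ i) h)]
      _ = 1 := by
          rw [← hcomp]
          refine Finset.sum_congr rfl fun i _ => ?_
          rw [mul_inv_cancel₀ (hl i).ne', if_pos rfl, one_smul, one_smul]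
  have hWinv : W⁻¹ = V := inv_eq_right_inv hWV
  have hVM : ∀ a b, V * M a b = (l a)⁻¹ • M a b := by
    intro a b
    rw [hVdef, Finset.sum_mul]
    calc ∑ i, ((l i)⁻¹ • M i i) * M a b
        = ∑ i, (l i)⁻¹ • ((if i = a then (1:ℝ) else 0) • M i b) := by
          refine Finset.sum_congr rfl fun i _ => ?_
          rw [smul_mul_assoc, hMmul]
      _ = (l a)⁻¹ • M a b := sum_ite_smul a _ _
  have hMV : ∀ a b, M a b * V = (l b)⁻¹ • M a b := by
    intro a b
    rw [hVdef, Finset.mul_sum]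
    calc ∑ i, M a b * ((l i)⁻¹ • M i i)
        = ∑ i, (l i)⁻¹ • ((if b = i then (1:ℝ) else 0) • M a i) := by
          refine Finset.sum_congr rfl fun i _ => ?_
          rw [mul_smul_comm, hMmul]
      _ = ∑ i, (l i)⁻¹ • ((if i = b then (1:ℝ) else 0) • M a i) := by
          refine Finset.sum_congr rfl fun i _ => ?_
          rcases eq_or_ne i b with rfl | h
          · rfl
          · simp [h, Ne.symm h]
      _ = (l b)⁻¹ • M a b := sum_ite_smul b _ _
  have hKsymm : ∀ a b, K a b = K b a := by
    intro a b
    rw [hKdef]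
    simp only
    rw [dotProduct_mulVec, ← hL.eq, Matrix.vecMul_transpose, dotProduct_comm,
      hL.eq]
  have hLrec : ∑ a, ∑ b, K a b • M a b = L := by
    have expand : ∀ a b, M a a * L * M b b = K a b • M a b := by
      intro a b
      rw [hMdef]
      simp only
      rw [vmv_mul, vmv_mul_vmv, ← dotProduct_mulVec]
    calc ∑ a, ∑ b, K a b • M a b = ∑ a, ∑ b, M a a * L * M b b :=
          Finset.sum_congr rfl fun a _ => Finset.sum_congr rfl fun b _ => (expand a b).symm
      _ = (∑ a, M a a) * L * (∑ b, M b b) := by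
          rw [Finset.sum_mul, Finset.sum_mul]
          exact Finset.sum_congr rfl fun a _ => (Finset.mul_sum _ _ _).symm
      _ = L := by rw [hcomp, one_mul, mul_one]
  set A : Fin d → Fin d → ℝ := fun a b => c a * c b * K a b with hAdef
  set B : Fin d → Fin d → ℝ := fun a b => (c a)⁻¹ * (c b)⁻¹ with hBdef
  have hclinv : ∀ i, c i * (l i)⁻¹ = (c i)⁻¹ := by
    intro i
    rw [← hc2 i, mul_inv, ← mul_assoc, mul_inv_cancel₀ (hc0 i), one_mul]
  have hAB : ∀ a b, A a b * B a b = K a b := by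
    intro a b
    simp only [hAdef, hBdef]
    field_simp
    exact mul_div_cancel_left₀ _ (mul_ne_zero (hc0 a) (hc0 b))
  have hBsymm : ∀ a b, B a b = B b a := by
    intro a b; simp only [hBdef]; ring
  have hAdiag : ∀ a, A a a = l a * K a a := by
    intro a; simp only [hAdef]; rw [hc2]
  have hBdiag : ∀ a, B a a = (l a)⁻¹ := by
    intro a; simp only [hBdef]; rw [← mul_inv, hc2]
  have hKapp : ∀ a b, dotProduct (u a) (L.mulVec (u b)) = K a b := fun a b => rfl
  have htr : ∀ s : Fin d → ℝ,
      Matrix.trace (Matrix.vecMulVec (∑ i, (s i * Real.sqrt (l i)) • u i)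
        (∑ i, (s i * Real.sqrt (l i)) • u i) * L) = ∑ a, ∑ b, (s a * s b) * A a b := by
    intro s
    rw [show (∑ i, (s i * Real.sqrt (l i)) • u i) = ∑ i, (s i * c i) • u i from rfl,
      vmv_sum_sum, Finset.sum_mul, trace_sum]
    refine Finset.sum_congr rfl fun a _ => ?_
    rw [Finset.sum_mul, trace_sum]
    refine Finset.sum_congr rfl fun b _ => ?_
    rw [smul_mul_assoc, trace_smul, trace_vmv_mul, hKapp, hKsymm b a, smul_eq_mul]
    simp only [hAdef]
    ring
  have hmat : ∀ s : Fin d → ℝ,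
      W⁻¹ * Matrix.vecMulVec (∑ i, (s i * Real.sqrt (l i)) • u i)
        (∑ i, (s i * Real.sqrt (l i)) • u i) * W⁻¹
      = ∑ p, ∑ q, ((s p * s q) * B p q) • M p q := by
    intro s
    rw [hWinv, show (∑ i, (s i * Real.sqrt (l i)) • u i) = ∑ i, (s i * c i) • u i from rfl,
      vmv_sum_sum, conj_sum]
    refine Finset.sum_congr rfl fun p _ => ?_
    refine Finset.sum_congr rfl fun q _ => ?_
    show (s p * c p * (s q * c q)) • (V * M p q * V) = _
    rw [hVM, smul_mul_assoc, hMV, smul_smul, smul_smul]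
    congr 1
    simp only [hBdef]
    rw [← hclinv p, ← hclinv q]
    ring
  set S := Fintype.piFinset (fun _ : Fin d => ({-1, 1} : Finset ℝ)) with hSdef
  set T : Matrix (Fin d) (Fin d) ℝ := ∑ i, K i i • M i i with hTdef
  have expand : ∀ s : Fin d → ℝ,
      (∑ a, ∑ b, (s a * s b) * A a b) • ((∑ p, ∑ q, ((s p * s q) * B p q) • M p q) - V)
      = (∑ a, ∑ b, ∑ p, ∑ q, ((s a * s b * s p * s q) * (A a b * B p q)) • M p q)
        - (∑ a, ∑ b, ((s a * s b) * A a b) • V) := by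
    intro s
    rw [smul_sub]
    congr 1
    · rw [Finset.sum_smul]
      refine Finset.sum_congr rfl fun a _ => ?_
      rw [Finset.sum_smul]
      refine Finset.sum_congr rfl fun b _ => ?_
      rw [Finset.smul_sum]
      refine Finset.sum_congr rfl fun p _ => ?_
      rw [Finset.smul_sum]
      refine Finset.sum_congr rfl fun q _ => ?_
      rw [smul_smul]
      congr 1
      ring
    · rw [Finset.sum_smul]
      refine Finset.sum_congr rfl fun a _ => ?_
      rw [Finset.sum_smul]
  have swapX : ∑ s ∈ S, ∑ a, ∑ b, ∑ p, ∑ q, ((s a * s b * s p * s q) * (A a b * B p q)) • M p q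
      = ∑ a, ∑ b, ∑ p, ∑ q, ((∑ s ∈ S, s a * s b * s p * s q) * (A a b * B p q)) • M p q := by
    rw [Finset.sum_comm]
    refine Finset.sum_congr rfl fun a _ => ?_
    rw [Finset.sum_comm]
    refine Finset.sum_congr rfl fun b _ => ?_
    rw [Finset.sum_comm]
    refine Finset.sum_congr rfl fun p _ => ?_
    rw [Finset.sum_comm]
    refine Finset.sum_congr rfl fun q _ => ?_
    rw [← Finset.sum_smul, ← Finset.sum_mul]
  have swapY : ∑ s ∈ S, ∑ a, ∑ b, ((s a * s b) * A a b) • V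
      = ∑ a, ∑ b, ((∑ s ∈ S, s a * s b) * A a b) • V := by
    rw [Finset.sum_comm]
    refine Finset.sum_congr rfl fun a _ => ?_
    rw [Finset.sum_comm]
    refine Finset.sum_congr rfl fun b _ => ?_
    rw [← Finset.sum_smul, ← Finset.sum_mul]
  have hYval : ∑ a, ∑ b, ((∑ s ∈ S, s a * s b) * A a b) • V
      = (2:ℝ)^d • (∑ a, A a a) • V := by
    simp only [hSdef, moment2]
    calc ∑ a, ∑ b, ((if a = b then (2:ℝ)^d else 0) * A a b) • V
        = ∑ a, ((2:ℝ)^d * A a a) • V := by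
          refine Finset.sum_congr rfl fun a _ => ?_
          refine (Finset.sum_eq_single a (fun b _ hb => ?_)
            (fun h => absurd (Finset.mem_univ a) h)).trans (by rw [if_pos rfl])
          rw [if_neg (fun h => hb h.symm), zero_mul, zero_smul]
      _ = (2:ℝ)^d • (∑ a, A a a) • V := by
          rw [← Finset.sum_smul, ← Finset.mul_sum, ← smul_smul]
  have hsplit : ∀ a b p q : Fin d,
      ((2:ℝ)^d * ((if a = b then (1:ℝ) else 0) * (if p = q then 1 else 0)
          + (if a = p then 1 else 0) * (if b = q then 1 else 0)
          + (if a = q then 1 else 0) * (if b = p then 1 else 0)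
          - 2 * (if a = b ∧ b = p ∧ p = q then 1 else 0)) * (A a b * B p q)) • M p q
      = (2:ℝ)^d • (((if a = b then (1:ℝ) else 0) * ((if p = q then (1:ℝ) else 0) * (A a b * B p q))) • M p q
          + (((if a = p then (1:ℝ) else 0) * ((if b = q then (1:ℝ) else 0) * (A a b * B p q))) • M p q
            + ((if a = q then (1:ℝ) else 0) * ((if b = p then (1:ℝ) else 0) * (A a b * B p q))) • M p q)
          - (2 * (if a = b ∧ b = p ∧ p = q then (1:ℝ) else 0) * (A a b * B p q)) • M p q) := by
    intro a b p q
    module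
  have hQ1 : ∑ a, ∑ b, ∑ p, ∑ q, (((if a = b then (1:ℝ) else 0) * ((if p = q then 1 else 0) * (A a b * B p q))) • M p q)
      = (∑ a, A a a) • V := by
    calc ∑ a, ∑ b, ∑ p, ∑ q, (((if a = b then (1:ℝ) else 0) * ((if p = q then 1 else 0) * (A a b * B p q))) • M p q)
        = ∑ a, ∑ b, ∑ p, (((if a = b then (1:ℝ) else 0) * (A a b * B p p)) • M p p) := by
          refine Finset.sum_congr rfl fun a _ => Finset.sum_congr rfl fun b _ =>
            Finset.sum_congr rfl fun p _ => ?_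
          refine (Finset.sum_eq_single p (fun q _ hq => ?_) (fun h => absurd (Finset.mem_univ p) h)).trans ?_
          · rw [if_neg (show ¬(p = q) from fun h => hq h.symm)]
            simp
          · rw [if_pos (rfl : p = p), one_mul]
      _ = ∑ a, ∑ p, ((A a a * B p p) • M p p) := by
          refine Finset.sum_congr rfl fun a _ => ?_
          refine (Finset.sum_eq_single a (fun b _ hb => Finset.sum_eq_zero fun p _ => ?_)
            (fun h => absurd (Finset.mem_univ a) h)).trans
            (Finset.sum_congr rfl fun p _ => by rw [if_pos rfl, one_mul])
          rw [if_neg (fun h => hb h.symm)]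
          simp
      _ = (∑ a, A a a) • V := by
          rw [Finset.sum_smul]
          refine Finset.sum_congr rfl fun a _ => ?_
          rw [hVdef, Finset.smul_sum]
          refine Finset.sum_congr rfl fun p _ => ?_
          rw [hBdiag, smul_smul]
  have hQ2 : ∑ a, ∑ b, ∑ p, ∑ q, (((if a = p then (1:ℝ) else 0) * ((if b = q then 1 else 0) * (A a b * B p q))) • M p q)
      = L := by
    calc ∑ a, ∑ b, ∑ p, ∑ q, (((if a = p then (1:ℝ) else 0) * ((if b = q then 1 else 0) * (A a b * B p q))) • M p q)
        = ∑ a, ∑ b, ∑ p, (((if a = p then (1:ℝ) else 0) * (A a b * B p b)) • M p b) := by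
          refine Finset.sum_congr rfl fun a _ => Finset.sum_congr rfl fun b _ =>
            Finset.sum_congr rfl fun p _ => ?_
          refine (Finset.sum_eq_single b (fun q _ hq => ?_) (fun h => absurd (Finset.mem_univ b) h)).trans ?_
          · rw [if_neg (show ¬(b = q) from fun h => hq h.symm)]
            simp
          · rw [if_pos (rfl : b = b), one_mul]
      _ = ∑ a, ∑ b, ((A a b * B a b) • M a b) := by
          refine Finset.sum_congr rfl fun a _ => Finset.sum_congr rfl fun b _ => ?_
          refine (Finset.sum_eq_single a (fun p _ hp => ?_) (fun h => absurd (Finset.mem_univ a) h)).trans ?_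
          · rw [if_neg (show ¬(a = p) from fun h => hp h.symm)]
            simp
          · rw [if_pos (rfl : a = a), one_mul]
      _ = L := by
          rw [← hLrec]
          exact Finset.sum_congr rfl fun a _ => Finset.sum_congr rfl fun b _ => by rw [hAB]
  have hQ3 : ∑ a, ∑ b, ∑ p, ∑ q, (((if a = q then (1:ℝ) else 0) * ((if b = p then 1 else 0) * (A a b * B p q))) • M p q)
      = L := by
    calc ∑ a, ∑ b, ∑ p, ∑ q, (((if a = q then (1:ℝ) else 0) * ((if b = p then 1 else 0) * (A a b * B p q))) • M p q)
        = ∑ a, ∑ b, ∑ p, (((if b = p then (1:ℝ) else 0) * (A a b * B p a)) • M p a) := by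
          refine Finset.sum_congr rfl fun a _ => Finset.sum_congr rfl fun b _ =>
            Finset.sum_congr rfl fun p _ => ?_
          refine (Finset.sum_eq_single a (fun q _ hq => ?_) (fun h => absurd (Finset.mem_univ a) h)).trans ?_
          · rw [if_neg (show ¬(a = q) from fun h => hq h.symm)]
            simp
          · rw [if_pos (rfl : a = a), one_mul]
      _ = ∑ a, ∑ b, ((A a b * B b a) • M b a) := by
          refine Finset.sum_congr rfl fun a _ => Finset.sum_congr rfl fun b _ => ?_
          refine (Finset.sum_eq_single b (fun p _ hp => ?_) (fun h => absurd (Finset.mem_univ b) h)).trans ?_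
          · rw [if_neg (show ¬(b = p) from fun h => hp h.symm)]
            simp
          · rw [if_pos (rfl : b = b), one_mul]
      _ = ∑ a, ∑ b, (K a b • M b a) := by
          refine Finset.sum_congr rfl fun a _ => Finset.sum_congr rfl fun b _ => ?_
          rw [hBsymm, hAB]
      _ = ∑ b, ∑ a, (K a b • M b a) := Finset.sum_comm
      _ = L := by
          rw [← hLrec]
          exact Finset.sum_congr rfl fun b _ => Finset.sum_congr rfl fun a _ => by rw [hKsymm]
  have hQ4 : ∑ a, ∑ b, ∑ p, ∑ q, ((2 * (if a = b ∧ b = p ∧ p = q then (1:ℝ) else 0) * (A a b * B p q)) • M p q)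
      = (2:ℝ) • T := by
    calc ∑ a, ∑ b, ∑ p, ∑ q, ((2 * (if a = b ∧ b = p ∧ p = q then (1:ℝ) else 0) * (A a b * B p q)) • M p q)
        = ∑ a, ∑ b, ∑ p, ((2 * (if a = b ∧ b = p then (1:ℝ) else 0) * (A a b * B p p)) • M p p) := by
          refine Finset.sum_congr rfl fun a _ => Finset.sum_congr rfl fun b _ =>
            Finset.sum_congr rfl fun p _ => ?_
          refine (Finset.sum_eq_single p (fun q _ hq => ?_) (fun h => absurd (Finset.mem_univ p) h)).trans ?_
          · rw [if_neg (show ¬(a = b ∧ b = p ∧ p = q) from fun h => hq h.2.2.symm)]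
            simp
          · have hcond : (if a = b ∧ b = p ∧ p = p then (1:ℝ) else 0)
                = (if a = b ∧ b = p then (1:ℝ) else 0) := by
              by_cases h : a = b ∧ b = p
              · rw [if_pos ⟨h.1, h.2, rfl⟩, if_pos h]
              · rw [if_neg (fun hh => h ⟨hh.1, hh.2.1⟩), if_neg h]
            rw [hcond]
      _ = ∑ a, ∑ b, ((2 * (if a = b then (1:ℝ) else 0) * (A a b * B b b)) • M b b) := by
          refine Finset.sum_congr rfl fun a _ => Finset.sum_congr rfl fun b _ => ?_
          refine (Finset.sum_eq_single b (fun p _ hp => ?_) (fun h => absurd (Finset.mem_univ b) h)).trans ?_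
          · rw [if_neg (show ¬(a = b ∧ b = p) from fun h => hp h.2.symm)]
            simp
          · have hcond : (if a = b ∧ b = b then (1:ℝ) else 0)
                = (if a = b then (1:ℝ) else 0) := by
              by_cases h : a = b
              · rw [if_pos ⟨h, rfl⟩, if_pos h]
              · rw [if_neg (fun hh => h hh.1), if_neg h]
            rw [hcond]
      _ = ∑ a, ((2 * (A a a * B a a)) • M a a) := by
          refine Finset.sum_congr rfl fun a _ => ?_
          refine (Finset.sum_eq_single a (fun b _ hb => ?_) (fun h => absurd (Finset.mem_univ a) h)).trans ?_
          · rw [if_neg (show ¬(a = b) from fun h => hb h.symm)]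
            simp
          · rw [if_pos (rfl : a = a), mul_one]
      _ = (2:ℝ) • T := by
          rw [hTdef, Finset.smul_sum]
          refine Finset.sum_congr rfl fun a _ => ?_
          rw [hAB, ← smul_smul]
  have hXval : ∑ a, ∑ b, ∑ p, ∑ q, ((∑ s ∈ S, s a * s b * s p * s q) * (A a b * B p q)) • M p q
      = (2:ℝ)^d • ((∑ a, A a a) • V + (L + L) - (2:ℝ) • T) := by
    simp only [hSdef, moment4]
    simp only [hsplit]
    simp only [← Finset.smul_sum]
    congr 1
    simp only [Finset.sum_add_distrib, Finset.sum_sub_distrib]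
    rw [hQ1, hQ2, hQ3, hQ4]
  have h2d : ((2:ℝ)^d) ≠ 0 := pow_ne_zero d two_ne_zero
  calc ((2 : ℝ) ^ d)⁻¹ •
      ∑ s ∈ S,
        (Matrix.trace
            (Matrix.vecMulVec (∑ i, (s i * Real.sqrt (l i)) • u i)
              (∑ i, (s i * Real.sqrt (l i)) • u i) * L)) •
          (W⁻¹ * Matrix.vecMulVec (∑ i, (s i * Real.sqrt (l i)) • u i)
              (∑ i, (s i * Real.sqrt (l i)) • u i) * W⁻¹ - W⁻¹)
      = ((2 : ℝ) ^ d)⁻¹ • ∑ s ∈ S,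
          ((∑ a, ∑ b, (s a * s b) * A a b) • ((∑ p, ∑ q, ((s p * s q) * B p q) • M p q) - V)) := by
        refine congrArg _ (Finset.sum_congr rfl fun s _ => ?_)
        rw [htr s, hmat s, hWinv]
    _ = ((2 : ℝ) ^ d)⁻¹ •
        ((∑ a, ∑ b, ∑ p, ∑ q, ((∑ s ∈ S, s a * s b * s p * s q) * (A a b * B p q)) • M p q)
          - (∑ a, ∑ b, ((∑ s ∈ S, s a * s b) * A a b) • V)) := by
        rw [← swapX, ← swapY, ← Finset.sum_sub_distrib]
        exact congrArg _ (Finset.sum_congr rfl fun s _ => expand s)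
    _ = ((2 : ℝ) ^ d)⁻¹ • ((2:ℝ)^d • ((∑ a, A a a) • V + (L + L) - (2:ℝ) • T)
          - (2:ℝ)^d • (∑ a, A a a) • V) := by rw [hXval, hYval]
    _ = ((2 : ℝ) ^ d)⁻¹ • ((2:ℝ)^d • ((L + L) - (2:ℝ) • T)) := by
        congr 1
        module
    _ = (L + L) - (2:ℝ) • T := by
        rw [smul_smul, inv_mul_cancel₀ h2d, one_smul]
    _ = (2 : ℝ) • (L - T) := by module
end

section
/- Let U be a symmetric PSD d×d matrix with tr(U) = 1, θ ∈ (0,1), and let Ũ = (1−θ)U + (θ/d)I. Then the Bregman divergence induced by the log-determinant regularizer between Ũ and W₁ = (1/d)I satisfies D_R(Ũ ‖ (1/d)I) ≤ d log(1/θ). -/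
open Matrix

lemma eig_ge_aux (d : ℕ) (M : Matrix (Fin d) (Fin d) ℝ) (hM : M.IsHermitian) (θ : ℝ)
    (h : (M - θ • (1 : Matrix (Fin d) (Fin d) ℝ)).PosSemidef) (i : Fin d) :
    θ ≤ hM.eigenvalues i := by
  set v := ⇑(hM.eigenvectorBasis i) with hv
  have hnorm : (star v) ⬝ᵥ v = 1 := by
    have h1 : ‖hM.eigenvectorBasis i‖ = 1 := hM.eigenvectorBasis.orthonormal.1 i
    have := EuclideanSpace.inner_eq_star_dotProduct (hM.eigenvectorBasis i)
      (hM.eigenvectorBasis i)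
    rw [real_inner_self_eq_norm_sq, h1] at this
    simpa using this.symm
  have h0 := h.dotProduct_mulVec_nonneg v
  have hMv : M *ᵥ v = hM.eigenvalues i • v := hM.mulVec_eigenvectorBasis i
  rw [sub_mulVec, hMv, smul_mulVec, one_mulVec, dotProduct_sub,
    dotProduct_smul, dotProduct_smul, hnorm] at h0
  simp only [smul_eq_mul, mul_one, RCLike.star_def] at h0
  simpa using sub_nonneg.mp h0

/-- For `U` SPSD with unit trace, `θ ∈ (0,1)`, and the smoothed comparator
`Ũ = (1−θ)U + (θ/d)I`, the log-determinant Bregman divergence to `W₁ = (1/d)I`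
satisfies `D_R(Ũ ‖ (1/d)I) ≤ d log(1/θ)`. -/
theorem stmt_16 (d : ℕ) (hd : 0 < d) (U : Matrix (Fin d) (Fin d) ℝ)
    (hU : U.PosSemidef) (htr : Matrix.trace U = 1)
    (θ : ℝ) (hθ0 : 0 < θ) (hθ1 : θ < 1) :
    Matrix.trace ((((d : ℝ)⁻¹ • (1 : Matrix (Fin d) (Fin d) ℝ))⁻¹)
          * ((1 - θ) • U + (θ / d) • (1 : Matrix (Fin d) (Fin d) ℝ)))
      - Real.log (((((d : ℝ)⁻¹ • (1 : Matrix (Fin d) (Fin d) ℝ))⁻¹)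
          * ((1 - θ) • U + (θ / d) • (1 : Matrix (Fin d) (Fin d) ℝ))).det)
      - (d : ℝ)
      ≤ (d : ℝ) * Real.log (1 / θ) := by
  have hdR : (0 : ℝ) < (d : ℝ) := by exact_mod_cast hd
  -- compute the inverse
  have hinv : (((d : ℝ)⁻¹ • (1 : Matrix (Fin d) (Fin d) ℝ))⁻¹)
      = (d : ℝ) • (1 : Matrix (Fin d) (Fin d) ℝ) := by
    apply Matrix.inv_eq_right_inv
    rw [smul_mul_smul_comm, one_mul, inv_mul_cancel₀ hdR.ne', one_smul]
  set M : Matrix (Fin d) (Fin d) ℝ :=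
    ((d : ℝ) * (1 - θ)) • U + θ • (1 : Matrix (Fin d) (Fin d) ℝ) with hMdef
  have hprod : (((d : ℝ)⁻¹ • (1 : Matrix (Fin d) (Fin d) ℝ))⁻¹)
      * ((1 - θ) • U + (θ / d) • (1 : Matrix (Fin d) (Fin d) ℝ)) = M := by
    rw [hinv, hMdef, Matrix.smul_mul, Matrix.one_mul, smul_add, smul_smul, smul_smul]
    congr 2
    field_simp
  rw [hprod]
  -- trace of M
  have htrM : Matrix.trace M = (d : ℝ) := by
    rw [hMdef, trace_add, trace_smul, trace_smul, htr, trace_one]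
    simp
    ring
  -- M is hermitian
  have hsmulH : ∀ (c : ℝ) (A : Matrix (Fin d) (Fin d) ℝ), A.IsHermitian →
      (c • A).IsHermitian := by
    intro c A h
    show (c • A)ᴴ = c • A
    rw [conjTranspose_smul, h.eq, star_trivial]
  have hMh : M.IsHermitian :=
    IsHermitian.add (hsmulH _ _ hU.1) (hsmulH _ _ isHermitian_one)
  -- M - θ•1 is PSD
  have hpsd : (M - θ • (1 : Matrix (Fin d) (Fin d) ℝ)).PosSemidef := by
    have : M - θ • (1 : Matrix (Fin d) (Fin d) ℝ) = ((d : ℝ) * (1 - θ)) • U := by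
      rw [hMdef]; ring_nf; abel
    rw [this]
    have hc : (0 : ℝ) ≤ (d : ℝ) * (1 - θ) := mul_nonneg hdR.le (by linarith)
    refine PosSemidef.of_dotProduct_mulVec_nonneg ?_ ?_
    · exact hsmulH _ _ hU.1
    · intro x
      have := hU.dotProduct_mulVec_nonneg x
      rw [smul_mulVec, dotProduct_smul]
      simpa using mul_nonneg hc this
  -- eigenvalue bound
  have heig : ∀ i, θ ≤ hMh.eigenvalues i := fun i => eig_ge_aux d M hMh θ hpsd i
  -- determinant bound
  have hdet : θ ^ d ≤ M.det := by
    have := hMh.det_eq_prod_eigenvalues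
    rw [this]
    calc θ ^ d = ∏ _i : Fin d, θ := by simp
    _ ≤ ∏ i, hMh.eigenvalues i := by
        apply Finset.prod_le_prod
        · intro i _; exact hθ0.le
        · intro i _; exact heig i
  have hdetpos : (0 : ℝ) < M.det := lt_of_lt_of_le (pow_pos hθ0 d) hdet
  have hlog : (d : ℝ) * Real.log θ ≤ Real.log M.det := by
    calc (d : ℝ) * Real.log θ = Real.log (θ ^ d) := by rw [Real.log_pow]
    _ ≤ Real.log M.det := Real.log_le_log (pow_pos hθ0 d) hdet
  rw [htrM, Real.log_div one_ne_zero hθ0.ne', Real.log_one]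
  linarith
end
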